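/- arXiv:1204.0495 — 5 statements merged into one kernel-verified Lean document; each statement's English description precedes it below -/
import Mathlib

section
/- Let H be a connected finite simple graph of diameter two and order n that has no true twins (no two distinct vertices x, y satisfy N[x] = N[y]). Then dim_s(H) = n − ω(H). -/
open SimpleGraph

/-- A vertex `w` strongly resolves the pair `u`, `v` if `v` lies on some shortest `u`–`w`
path or `u` lies on some shortest `v`–`w` path. -/
def StronglyResolves {V : Type*} (G : SimpleGraph V) (w u v : V) : Prop :=
  G.dist u w = G.dist u v + G.dist v w ∨ G.dist v w = G.dist v u + G.dist u w

/-- `S` is a strong resolving set for `G` if every pair of distinct vertices is strongly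
resolved by some vertex of `S`. -/
def IsStrongResolvingSet {V : Type*} (G : SimpleGraph V) (S : Set V) : Prop :=
  ∀ u v : V, u ≠ v → ∃ w ∈ S, StronglyResolves G w u v

/-- The strong metric dimension: the minimum cardinality of a strong resolving set. -/
noncomputable def strongDim {V : Type*} (G : SimpleGraph V) [Fintype V] : ℕ :=
  sInf {k | ∃ S : Finset V, IsStrongResolvingSet G ↑S ∧ S.card = k}

/-- The closed neighborhood of a vertex. -/
def closedNbhd {V : Type*} (G : SimpleGraph V) (v : V) : Set V :=
  insert v (G.neighborSet v)

/-- A twin-free clique: a clique containing no pair of true twins. -/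
def IsTwinFreeClique {V : Type*} (G : SimpleGraph V) (X : Finset V) : Prop :=
  G.IsClique ↑X ∧ ∀ u ∈ X, ∀ v ∈ X, u ≠ v → closedNbhd G u ≠ closedNbhd G v

/-- The twin-free clique number: maximum cardinality of a twin-free clique. -/
noncomputable def twinFreeCliqueNum {V : Type*} (G : SimpleGraph V) [Fintype V] : ℕ :=
  sSup {k | ∃ X : Finset V, IsTwinFreeClique G X ∧ X.card = k}

/-- Adjacency relation of the join of two graphs. -/
def joinAdj {V W : Type*} (G : SimpleGraph V) (H : SimpleGraph W) :
    V ⊕ W → V ⊕ W → Prop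
  | Sum.inl a, Sum.inl b => G.Adj a b
  | Sum.inr a, Sum.inr b => H.Adj a b
  | Sum.inl _, Sum.inr _ => True
  | Sum.inr _, Sum.inl _ => True

/-- The join `G + H`: disjoint union of `G` and `H` plus all edges between them. -/
def joinGraph {V W : Type*} (G : SimpleGraph V) (H : SimpleGraph W) :
    SimpleGraph (V ⊕ W) where
  Adj := joinAdj G H
  symm := by
    constructor
    rintro (a | a) (b | b) h
    · exact G.adj_symm h
    · trivial
    · trivial
    · exact H.adj_symm h
  loopless := by
    constructor
    rintro (a | a) h
    · exact G.irrefl h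
    · exact H.irrefl h

/-- Adjacency relation of the corona product `G ⊙ H`. -/
def coronaAdj {V W : Type*} (G : SimpleGraph V) (H : SimpleGraph W) :
    V ⊕ V × W → V ⊕ V × W → Prop
  | Sum.inl a, Sum.inl b => G.Adj a b
  | Sum.inr p, Sum.inr q => p.1 = q.1 ∧ H.Adj p.2 q.2
  | Sum.inl a, Sum.inr q => a = q.1
  | Sum.inr p, Sum.inl b => p.1 = b

/-- The corona product `G ⊙ H`: one copy of `G` and one copy of `H` for each vertex of
`G`, with the `i`-th vertex of `G` joined to every vertex of the `i`-th copy of `H`. -/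
def corona {V W : Type*} (G : SimpleGraph V) (H : SimpleGraph W) :
    SimpleGraph (V ⊕ V × W) where
  Adj := coronaAdj G H
  symm := by
    constructor
    rintro (a | p) (b | q) h
    · exact G.adj_symm h
    · exact h.symm
    · exact h.symm
    · exact ⟨h.1.symm, H.adj_symm h.2⟩
  loopless := by
    constructor
    rintro (a | p) h
    · exact G.irrefl h
    · exact H.irrefl h.2

/-- The disjoint union of copies of `H`, one copy for each element of `V`. -/
def copies (V : Type*) {W : Type*} (H : SimpleGraph W) : SimpleGraph (V × W) where
  Adj p q := p.1 = q.1 ∧ H.Adj p.2 q.2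
  symm := ⟨fun _ _ h => ⟨h.1.symm, h.2.symm⟩⟩
  loopless := ⟨fun p h => H.irrefl h.2⟩

/-- The algebraic connectivity: the second smallest eigenvalue (with multiplicity,
in nondecreasing order) of the Laplacian matrix. -/
noncomputable def algebraicConnectivity {V : Type*} (G : SimpleGraph V) [Fintype V]
    [DecidableEq V] [DecidableRel G.Adj] : ℝ :=
  (((Finset.univ.val.map ((G.posSemidef_lapMatrix ℝ).isHermitian.eigenvalues)).sort
    (· ≤ ·)).getD 1 0)

/-- Let `H` be a connected graph of diameter two and order `n` with no true
twins. Then `dim_s(H) = n − ω(H)`. -/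
theorem strongDim_eq_card_sub_cliqueNum_of_diam_two_of_no_true_twins {V : Type*}
    [Fintype V] (H : SimpleGraph V) (hconn : H.Connected) (hdiam : H.diam = 2)
    (htwins : ∀ x y : V, x ≠ y → closedNbhd H x ≠ closedNbhd H y) :
    strongDim H = Fintype.card V - H.cliqueNum := by
  classical
  haveI : Nonempty V := hconn.nonempty
  have hnt : H.ediam ≠ ⊤ := SimpleGraph.ediam_ne_top_of_diam_ne_zero (by rw [hdiam]; norm_num)
  have hle2 : ∀ u v : V, H.dist u v ≤ 2 := fun u v => hdiam ▸ H.dist_le_diam hnt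
  have hdist2 : ∀ u v : V, u ≠ v → ¬ H.Adj u v → H.dist u v = 2 := by
    intro u v hne hadj
    have h0 : H.dist u v ≠ 0 := fun h => hne (hconn.dist_eq_zero_iff.mp h)
    have h1 : H.dist u v ≠ 1 := fun h => hadj (SimpleGraph.dist_eq_one_iff_adj.mp h)
    have := hle2 u v; omega
  -- Lower bound: the complement of any strong resolving set is a clique.
  have lower : ∀ S : Finset V, IsStrongResolvingSet H ↑S →
      Fintype.card V - H.cliqueNum ≤ S.card := by
    intro S hS
    have hcl : H.IsClique (↑(Sᶜ) : Set V) := by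
      intro u hu v hv hne
      simp only [Finset.coe_compl, Set.mem_compl_iff, Finset.mem_coe] at hu hv
      by_contra hadj
      obtain ⟨w, hwS, hw⟩ := hS u v hne
      have hd := hdist2 u v hne hadj
      rcases hw with h | h
      · have h0 : H.dist v w = 0 := by have := hle2 u w; omega
        exact hv (hconn.dist_eq_zero_iff.mp h0 ▸ hwS)
      · have h0 : H.dist u w = 0 := by
          have := hle2 v w
          have hd' : H.dist v u = 2 := by rw [SimpleGraph.dist_comm]; exact hd
          omega
        exact hu (hconn.dist_eq_zero_iff.mp h0 ▸ hwS)
    have hcard : (Sᶜ).card ≤ H.cliqueNum := SimpleGraph.IsClique.card_le_cliqueNum (tc := hcl)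
    have := Finset.card_add_card_compl S
    omega
  -- Upper bound: complement of a maximum clique is a strong resolving set.
  obtain ⟨X, hX⟩ := H.exists_isNClique_cliqueNum
  have hres : IsStrongResolvingSet H ↑(Xᶜ) := by
    intro u v hne
    have mem_compl : ∀ w : V, w ∉ X → w ∈ (↑(Xᶜ) : Set V) := by
      intro w hw; simpa using hw
    by_cases hu : u ∈ X
    · by_cases hv : v ∈ X
      · -- both in the clique: adjacent, use twin-freeness
        have hadj : H.Adj u v := hX.isClique hu hv hne
        have htw := htwins u v hne
        rw [Ne, Set.ext_iff] at htw; push_neg at htw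
        obtain ⟨w, hw⟩ := htw
        have hmem : ∀ x y : V, (x ∈ closedNbhd H y) ↔ (x = y ∨ H.Adj y x) := by
          intro x y; simp [closedNbhd, SimpleGraph.mem_neighborSet]
        rw [hmem, hmem] at hw
        rcases hw with ⟨h1, h2⟩ | ⟨h1, h2⟩
        · -- w in N[u], not in N[v]
          push_neg at h2
          obtain ⟨hwv, hvw⟩ := h2
          have hwu : H.Adj u w := by
            rcases h1 with rfl | h1
            · exact absurd hadj.symm (by simpa [Ne.symm hne] using hvw)
            · exact h1
          refine ⟨w, mem_compl w (fun hwX => hvw (hX.isClique hv hwX (Ne.symm hwv))), Or.inr ?_⟩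
          rw [hdist2 v w (Ne.symm hwv) hvw, SimpleGraph.dist_eq_one_iff_adj.mpr hadj.symm,
            SimpleGraph.dist_eq_one_iff_adj.mpr hwu]
        · -- w in N[v], not in N[u]
          push_neg at h1
          obtain ⟨hwu, huw⟩ := h1
          have hwv : H.Adj v w := by
            rcases h2 with rfl | h2
            · exact absurd hadj (by simpa [hne] using huw)
            · exact h2
          refine ⟨w, mem_compl w (fun hwX => huw (hX.isClique hu hwX (Ne.symm hwu))), Or.inl ?_⟩
          rw [hdist2 u w (Ne.symm hwu) huw, SimpleGraph.dist_eq_one_iff_adj.mpr hadj,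
            SimpleGraph.dist_eq_one_iff_adj.mpr hwv]
      · -- v outside the clique: v resolves
        exact ⟨v, mem_compl v hv, Or.inl (by simp)⟩
    · -- u outside the clique: u resolves
      exact ⟨u, mem_compl u hu, Or.inr (by simp)⟩
  have hmem : Fintype.card V - H.cliqueNum ∈
      {k | ∃ S : Finset V, IsStrongResolvingSet H ↑S ∧ S.card = k} :=
    ⟨Xᶜ, hres, by rw [Finset.card_compl, hX.card_eq]⟩
  refine le_antisymm (Nat.sInf_le hmem) (le_csInf ⟨_, hmem⟩ ?_)
  rintro k ⟨S, hS, rfl⟩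
  exact lower S hS
end

section
/- Let G and H be connected finite simple graphs of order n₁ ≥ 2 and n₂ ≥ 2, of diameter two, with maximum degrees Δ₁ and Δ₂, respectively. If Δ₁ ≠ n₁ − 1 or Δ₂ ≠ n₂ − 1, then dim_s(G + H) = dim_s(G) + dim_s(H). -/
open SimpleGraph

section AuxLemmas

variable {V W : Type*} (G : SimpleGraph V) (H : SimpleGraph W)

lemma join_dist_inl_inr (u : V) (w : W) :
    (joinGraph G H).dist (Sum.inl u) (Sum.inr w) = 1 :=
  dist_eq_one_iff_adj.mpr trivial

lemma join_dist_inr_inl (w : W) (u : V) :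
    (joinGraph G H).dist (Sum.inr w) (Sum.inl u) = 1 :=
  dist_eq_one_iff_adj.mpr trivial

lemma join_dist_inl_inl [Nonempty W] (hG : G.Connected)
    (h2 : ∀ a b : V, G.dist a b ≤ 2) (u v : V) :
    (joinGraph G H).dist (Sum.inl u) (Sum.inl v) = G.dist u v := by
  by_cases huv : u = v
  · subst huv; rw [SimpleGraph.dist_self, SimpleGraph.dist_self]
  by_cases hadj : G.Adj u v
  · rw [dist_eq_one_iff_adj.mpr hadj]
    exact dist_eq_one_iff_adj.mpr hadj
  · have hG2 : G.dist u v = 2 := by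
      have h0 : G.dist u v ≠ 0 := fun hh => huv (hG.dist_eq_zero_iff.mp hh)
      have h1 : G.dist u v ≠ 1 := fun hh => hadj (dist_eq_one_iff_adj.mp hh)
      have := h2 u v; omega
    rw [hG2]
    obtain ⟨w⟩ := ‹Nonempty W›
    have p : (joinGraph G H).Walk (Sum.inl u) (Sum.inl v) :=
      Walk.cons (by trivial : (joinGraph G H).Adj (Sum.inl u) (Sum.inr w))
        (Walk.cons (by trivial : (joinGraph G H).Adj (Sum.inr w) (Sum.inl v)) Walk.nil)
    have hle : (joinGraph G H).dist (Sum.inl u) (Sum.inl v) ≤ 2 := by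
      exact SimpleGraph.dist_le
        (Walk.cons (by trivial : (joinGraph G H).Adj (Sum.inl u) (Sum.inr w))
          (Walk.cons (by trivial : (joinGraph G H).Adj (Sum.inr w) (Sum.inl v)) Walk.nil))
    have h0 : (joinGraph G H).dist (Sum.inl u) (Sum.inl v) ≠ 0 := by
      intro hh
      exact huv (Sum.inl_injective (p.reachable.dist_eq_zero_iff.mp hh))
    have h1 : (joinGraph G H).dist (Sum.inl u) (Sum.inl v) ≠ 1 := by
      intro hh
      have hadj' : (joinGraph G H).Adj (Sum.inl u) (Sum.inl v) := dist_eq_one_iff_adj.mp hh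
      exact hadj hadj'
    omega

lemma join_dist_inr_inr [Nonempty V] (hH : H.Connected)
    (h2 : ∀ a b : W, H.dist a b ≤ 2) (u v : W) :
    (joinGraph G H).dist (Sum.inr u) (Sum.inr v) = H.dist u v := by
  by_cases huv : u = v
  · subst huv; rw [SimpleGraph.dist_self, SimpleGraph.dist_self]
  by_cases hadj : H.Adj u v
  · rw [dist_eq_one_iff_adj.mpr hadj]
    exact dist_eq_one_iff_adj.mpr hadj
  · have hH2 : H.dist u v = 2 := by
      have h0 : H.dist u v ≠ 0 := fun hh => huv (hH.dist_eq_zero_iff.mp hh)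
      have h1 : H.dist u v ≠ 1 := fun hh => hadj (dist_eq_one_iff_adj.mp hh)
      have := h2 u v; omega
    rw [hH2]
    obtain ⟨w⟩ := ‹Nonempty V›
    have p : (joinGraph G H).Walk (Sum.inr u) (Sum.inr v) :=
      Walk.cons (by trivial : (joinGraph G H).Adj (Sum.inr u) (Sum.inl w))
        (Walk.cons (by trivial : (joinGraph G H).Adj (Sum.inl w) (Sum.inr v)) Walk.nil)
    have hle : (joinGraph G H).dist (Sum.inr u) (Sum.inr v) ≤ 2 := by
      exact SimpleGraph.dist_le
        (Walk.cons (by trivial : (joinGraph G H).Adj (Sum.inr u) (Sum.inl w))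
          (Walk.cons (by trivial : (joinGraph G H).Adj (Sum.inl w) (Sum.inr v)) Walk.nil))
    have h0 : (joinGraph G H).dist (Sum.inr u) (Sum.inr v) ≠ 0 := by
      intro hh
      exact huv (Sum.inr_injective (p.reachable.dist_eq_zero_iff.mp hh))
    have h1 : (joinGraph G H).dist (Sum.inr u) (Sum.inr v) ≠ 1 := by
      intro hh
      have hadj' : (joinGraph G H).Adj (Sum.inr u) (Sum.inr v) := dist_eq_one_iff_adj.mp hh
      exact hadj hadj'
    omega

/-- Every graph has a strong resolving set (the whole vertex set). -/
lemma univ_isStrongResolvingSet [Fintype V] :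
    IsStrongResolvingSet G (↑(Finset.univ : Finset V)) := by
  intro u v _
  refine ⟨u, by simp, Or.inr ?_⟩
  rw [SimpleGraph.dist_self, add_zero]

lemma strongDim_set_nonempty [Fintype V] :
    {k | ∃ S : Finset V, IsStrongResolvingSet G ↑S ∧ S.card = k}.Nonempty :=
  ⟨Fintype.card V, Finset.univ, univ_isStrongResolvingSet G, Finset.card_univ⟩

/-- In a connected graph of diameter at most two with no dominating vertex, any strong
resolving set contains, for each vertex `u`, either `u` itself or a vertex at
distance `2` from `u`. -/
lemma mem_or_exists_dist_two [Fintype V] [DecidableRel G.Adj] (hG : G.Connected)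
    (h2 : ∀ a b : V, G.dist a b ≤ 2) (hΔ : G.maxDegree ≠ Fintype.card V - 1)
    {S : Set V} (hS : IsStrongResolvingSet G S) (u : V) :
    u ∈ S ∨ ∃ x ∈ S, G.dist u x = 2 := by
  classical
  have hne : Nonempty V := hG.nonempty
  have hdeg : G.degree u < Fintype.card V - 1 := by
    have h1 := G.degree_le_maxDegree u
    have h2' := G.maxDegree_lt_card_verts
    omega
  have hcard : (insert u (G.neighborFinset u)).card < Fintype.card V := by
    have := Finset.card_insert_le u (G.neighborFinset u)
    rw [G.card_neighborFinset_eq_degree] at this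
    omega
  have hneq : insert u (G.neighborFinset u) ≠ Finset.univ := by
    intro hEq
    rw [hEq, Finset.card_univ] at hcard
    omega
  obtain ⟨x, _, hx⟩ :=
    Finset.exists_of_ssubset ((Finset.subset_univ _).ssubset_of_ne hneq)
  simp only [Finset.mem_insert, mem_neighborFinset] at hx
  push_neg at hx
  obtain ⟨hxu, hxadj⟩ := hx
  have hdx : G.dist u x = 2 := by
    have h0 : G.dist u x ≠ 0 := fun hh => hxu ((hG.dist_eq_zero_iff.mp hh).symm)
    have h1 : G.dist u x ≠ 1 := fun hh => hxadj (dist_eq_one_iff_adj.mp hh)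
    have := h2 u x; omega
  obtain ⟨w, hwS, hw⟩ := hS u x (fun hh => hxu hh.symm)
  rcases hw with hw | hw
  · have hb := h2 u w
    rw [hdx] at hw
    have hxw : G.dist x w = 0 := by omega
    have hxw' : x = w := hG.dist_eq_zero_iff.mp hxw
    exact Or.inr ⟨x, hxw' ▸ hwS, hdx⟩
  · have hb := h2 x w
    have hxu2 : G.dist x u = 2 := by rw [dist_comm]; exact hdx
    rw [hxu2] at hw
    have huw : G.dist u w = 0 := by omega
    have huw' : u = w := hG.dist_eq_zero_iff.mp huw
    exact Or.inl (huw' ▸ hwS)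

end AuxLemmas

/-- If `G`, `H` are connected graphs of order `n₁, n₂ ≥ 2` of diameter two
with maximum degrees `Δ₁ ≠ n₁ − 1` or `Δ₂ ≠ n₂ − 1`, then
`dim_s(G + H) = dim_s(G) + dim_s(H)`. -/
theorem strongDim_join_of_diam_two {V W : Type*} [Fintype V] [Fintype W]
    (G : SimpleGraph V) (H : SimpleGraph W) [DecidableRel G.Adj] [DecidableRel H.Adj]
    (hG : G.Connected) (hH : H.Connected)
    (hn1 : 2 ≤ Fintype.card V) (hn2 : 2 ≤ Fintype.card W)
    (hdG : G.diam = 2) (hdH : H.diam = 2)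
    (h : G.maxDegree ≠ Fintype.card V - 1 ∨ H.maxDegree ≠ Fintype.card W - 1) :
    strongDim (joinGraph G H) = strongDim G + strongDim H := by
  classical
  have hneV : Nonempty V := Fintype.card_pos_iff.mp (by omega)
  have hneW : Nonempty W := Fintype.card_pos_iff.mp (by omega)
  have hG2 : ∀ a b : V, G.dist a b ≤ 2 := fun a b =>
    hdG ▸ dist_le_diam (ediam_ne_top_of_diam_ne_zero (by omega))
  have hH2 : ∀ a b : W, H.dist a b ≤ 2 := fun a b =>
    hdH ▸ dist_le_diam (ediam_ne_top_of_diam_ne_zero (by omega))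
  have hll := join_dist_inl_inl G H hG hG2
  have hrr := join_dist_inr_inr G H hH hH2
  have hlr := join_dist_inl_inr G H
  have hrl := join_dist_inr_inl G H
  apply le_antisymm
  · -- upper bound: union of optimal strong resolving sets works
    obtain ⟨S₁, hS₁, hc₁⟩ : strongDim G ∈ _ := Nat.sInf_mem (strongDim_set_nonempty G)
    obtain ⟨S₂, hS₂, hc₂⟩ : strongDim H ∈ _ := Nat.sInf_mem (strongDim_set_nonempty H)
    set T : Finset (V ⊕ W) := S₁.image Sum.inl ∪ S₂.image Sum.inr with hT
    have hmemT₁ : ∀ w : V, w ∈ S₁ → Sum.inl w ∈ (↑T : Set (V ⊕ W)) := by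
      intro w hw
      simp only [hT, Finset.coe_union, Set.mem_union, Finset.coe_image, Set.mem_image,
        Finset.mem_coe]
      exact Or.inl ⟨w, hw, rfl⟩
    have hmemT₂ : ∀ w : W, w ∈ S₂ → Sum.inr w ∈ (↑T : Set (V ⊕ W)) := by
      intro w hw
      simp only [hT, Finset.coe_union, Set.mem_union, Finset.coe_image, Set.mem_image,
        Finset.mem_coe]
      exact Or.inr ⟨w, hw, rfl⟩
    have hTcard : T.card = strongDim G + strongDim H := by
      rw [hT, Finset.card_union_of_disjoint, Finset.card_image_of_injective _ Sum.inl_injective,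
        Finset.card_image_of_injective _ Sum.inr_injective, hc₁, hc₂]
      simp [Finset.disjoint_left]
    have hTres : IsStrongResolvingSet (joinGraph G H) ↑T := by
      rintro (u | u) (v | v) hne
      · -- both in V
        obtain ⟨w, hwS, hw⟩ := hS₁ u v (fun hh => hne (by rw [hh]))
        refine ⟨Sum.inl w, hmemT₁ w hwS, ?_⟩
        simp only [StronglyResolves, hll]
        exact hw
      · -- cross pair : u ∈ V, v ∈ W
        rcases h with hΔ | hΔ
        · rcases mem_or_exists_dist_two G hG hG2 hΔ hS₁ u with hu | ⟨x, hxS, hx⟩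
          · refine ⟨Sum.inl u, hmemT₁ u hu, Or.inr ?_⟩
            rw [SimpleGraph.dist_self, add_zero]
          · refine ⟨Sum.inl x, hmemT₁ x hxS, Or.inl ?_⟩
            rw [hll, hlr, hrl, hx]
        · rcases mem_or_exists_dist_two H hH hH2 hΔ hS₂ v with hv | ⟨x, hxS, hx⟩
          · refine ⟨Sum.inr v, hmemT₂ v hv, Or.inl ?_⟩
            rw [SimpleGraph.dist_self, add_zero]
          · refine ⟨Sum.inr x, hmemT₂ x hxS, Or.inr ?_⟩
            rw [hrr, hrl, hlr, hx]
      · -- cross pair : u ∈ W, v ∈ V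
        rcases h with hΔ | hΔ
        · rcases mem_or_exists_dist_two G hG hG2 hΔ hS₁ v with hv | ⟨x, hxS, hx⟩
          · refine ⟨Sum.inl v, hmemT₁ v hv, Or.inl ?_⟩
            rw [SimpleGraph.dist_self, add_zero]
          · refine ⟨Sum.inl x, hmemT₁ x hxS, Or.inr ?_⟩
            rw [hll, hlr, hrl, hx]
        · rcases mem_or_exists_dist_two H hH hH2 hΔ hS₂ u with hu | ⟨x, hxS, hx⟩
          · refine ⟨Sum.inr u, hmemT₂ u hu, Or.inr ?_⟩
            rw [SimpleGraph.dist_self, add_zero]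
          · refine ⟨Sum.inr x, hmemT₂ x hxS, Or.inl ?_⟩
            rw [hrr, hrl, hlr, hx]
      · -- both in W
        obtain ⟨w, hwS, hw⟩ := hS₂ u v (fun hh => hne (by rw [hh]))
        refine ⟨Sum.inr w, hmemT₂ w hwS, ?_⟩
        simp only [StronglyResolves, hrr]
        exact hw
    exact Nat.sInf_le ⟨T, hTres, hTcard⟩
  · -- lower bound
    obtain ⟨S, hS, hc⟩ : strongDim (joinGraph G H) ∈ _ :=
      Nat.sInf_mem (strongDim_set_nonempty (joinGraph G H))
    set S₁ : Finset V := Finset.univ.filter (fun v => Sum.inl v ∈ S) with hS₁def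
    set S₂ : Finset W := Finset.univ.filter (fun v => Sum.inr v ∈ S) with hS₂def
    have hres₁ : IsStrongResolvingSet G ↑S₁ := by
      intro u v hne
      obtain ⟨w, hwS, hw⟩ := hS (Sum.inl u) (Sum.inl v) (by simp [hne])
      rcases w with a | a
      · refine ⟨a, ?_, ?_⟩
        · simp only [hS₁def, Finset.coe_filter, Set.mem_setOf_eq, Finset.mem_univ, true_and]
          exact hwS
        · simp only [StronglyResolves, hll] at hw ⊢
          exact hw
      · exfalso
        simp only [StronglyResolves, hlr, hll] at hw
        have hpos : 0 < G.dist u v := hG.pos_dist_of_ne hne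
        have hpos' : 0 < G.dist v u := hG.pos_dist_of_ne (fun hh => hne hh.symm)
        rcases hw with hw | hw <;> omega
    have hres₂ : IsStrongResolvingSet H ↑S₂ := by
      intro u v hne
      obtain ⟨w, hwS, hw⟩ := hS (Sum.inr u) (Sum.inr v) (by simp [hne])
      rcases w with a | a
      · exfalso
        simp only [StronglyResolves, hrl, hrr] at hw
        have hpos : 0 < H.dist u v := hH.pos_dist_of_ne hne
        have hpos' : 0 < H.dist v u := hH.pos_dist_of_ne (fun hh => hne hh.symm)
        rcases hw with hw | hw <;> omega
      · refine ⟨a, ?_, ?_⟩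
        · simp only [hS₂def, Finset.coe_filter, Set.mem_setOf_eq, Finset.mem_univ, true_and]
          exact hwS
        · simp only [StronglyResolves, hrr] at hw ⊢
          exact hw
    have hsub : S₁.image Sum.inl ∪ S₂.image Sum.inr ⊆ S := by
      intro x hx
      simp only [Finset.mem_union, Finset.mem_image] at hx
      rcases hx with ⟨a, ha, rfl⟩ | ⟨a, ha, rfl⟩
      · exact (Finset.mem_filter.mp ha).2
      · exact (Finset.mem_filter.mp ha).2
    have hcards : S₁.card + S₂.card ≤ S.card := by
      have hcc := Finset.card_le_card hsub
      rwa [Finset.card_union_of_disjoint (by simp [Finset.disjoint_left]),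
        Finset.card_image_of_injective _ Sum.inl_injective,
        Finset.card_image_of_injective _ Sum.inr_injective] at hcc
    have h₁ : strongDim G ≤ S₁.card := Nat.sInf_le ⟨S₁, hres₁, rfl⟩
    have h₂ : strongDim H ≤ S₂.card := Nat.sInf_le ⟨S₂, hres₂, rfl⟩
    omega
end

section
/- Let H be a finite simple graph of order n₂ and maximum degree Δ. If Δ = n₂ − 1, then dim_s(K₁ + H) = n₂ + 1 − ϖ(H). -/
open SimpleGraph

section Aux
set_option linter.unusedSectionVars false

open SimpleGraph Finset

variable {W : Type*} [Fintype W] (H : SimpleGraph W)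

local notation "JG" => joinGraph (⊥ : SimpleGraph Unit) H

lemma jadj_inl_inr (a : Unit) (b : W) : (JG).Adj (Sum.inl a) (Sum.inr b) := trivial

lemma jadj_inr_inl (b : W) (a : Unit) : (JG).Adj (Sum.inr b) (Sum.inl a) := trivial

lemma jadj_inr_inr {b b' : W} : (JG).Adj (Sum.inr b) (Sum.inr b') ↔ H.Adj b b' := Iff.rfl

lemma not_jadj_inl_inl (a a' : Unit) : ¬ (JG).Adj (Sum.inl a) (Sum.inl a') := fun h => h

lemma j_preconnected : (JG).Preconnected := by
  have hc : ∀ z : Unit ⊕ W, (JG).Reachable (Sum.inl ()) z := by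
    rintro (⟨⟩ | b)
    · exact SimpleGraph.Reachable.refl _
    · exact (jadj_inl_inr H () b).reachable
  intro x y
  exact (hc x).symm.trans (hc y)

lemma j_dist_adj {x y : Unit ⊕ W} (hxy : (JG).Adj x y) : (JG).dist x y = 1 :=
  SimpleGraph.dist_eq_one_iff_adj.mpr hxy

lemma j_dist_nonadj {x y : Unit ⊕ W} (hne : x ≠ y) (hxy : ¬ (JG).Adj x y) :
    (JG).dist x y = 2 := by
  have hle : (JG).dist x y ≤ 2 := by
    match x, y with
    | Sum.inl a, Sum.inl b => exact absurd rfl hne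
    | Sum.inl a, Sum.inr b => exact absurd (jadj_inl_inr H a b) hxy
    | Sum.inr b, Sum.inl a => exact absurd (jadj_inr_inl H b a) hxy
    | Sum.inr b, Sum.inr b' =>
      exact le_trans (SimpleGraph.dist_le (SimpleGraph.Walk.cons (jadj_inr_inl H b ())
        (SimpleGraph.Walk.cons (jadj_inl_inr H () b') SimpleGraph.Walk.nil))) (by simp)
  have hpos : 0 < (JG).dist x y := (j_preconnected H x y).pos_dist_of_ne hne
  have hne1 : (JG).dist x y ≠ 1 := fun h1 => hxy (SimpleGraph.dist_eq_one_iff_adj.mp h1)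
  omega

/-- trichotomy of distances in the join. -/
lemma j_dist_tri (x y : Unit ⊕ W) :
    (x = y ∧ (JG).dist x y = 0) ∨ ((JG).Adj x y ∧ (JG).dist x y = 1) ∨
      (x ≠ y ∧ ¬ (JG).Adj x y ∧ (JG).dist x y = 2) := by
  by_cases hxy : x = y
  · exact Or.inl ⟨hxy, by simp [hxy]⟩
  by_cases hadj : (JG).Adj x y
  · exact Or.inr (Or.inl ⟨hadj, j_dist_adj H hadj⟩)
  · exact Or.inr (Or.inr ⟨hxy, hadj, j_dist_nonadj H hxy hadj⟩)

lemma sr_self_left (u v : Unit ⊕ W) : StronglyResolves (JG) u u v :=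
  Or.inr (by simp [SimpleGraph.dist_self])

lemma sr_self_right (u v : Unit ⊕ W) : StronglyResolves (JG) v u v :=
  Or.inl (by simp [SimpleGraph.dist_self])

lemma sr_adj_char {u v w : Unit ⊕ W} (huv : (JG).Adj u v) (hwu : w ≠ u) (hwv : w ≠ v) :
    StronglyResolves (JG) w u v ↔
      ((JG).Adj w u ∧ ¬ (JG).Adj w v) ∨ ((JG).Adj w v ∧ ¬ (JG).Adj w u) := by
  have duv : (JG).dist u v = 1 := j_dist_adj H huv
  have dvu : (JG).dist v u = 1 := j_dist_adj H huv.symm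
  unfold StronglyResolves
  rw [duv, dvu]
  rcases j_dist_tri H u w with ⟨h, _⟩ | ⟨h, hd⟩ | ⟨_, h, hd⟩
  · exact absurd h.symm hwu
  · rcases j_dist_tri H v w with ⟨h', _⟩ | ⟨h', hd'⟩ | ⟨_, h', hd'⟩
    · exact absurd h'.symm hwv
    · rw [hd, hd']
      constructor
      · rintro (h2 | h2) <;> omega
      · rintro (⟨h1, h2⟩ | ⟨h1, h2⟩)
        · exact absurd h'.symm h2
        · exact absurd h.symm h2
    · rw [hd, hd']
      constructor
      · intro _; exact Or.inl ⟨h.symm, fun hc => h' hc.symm⟩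
      · intro _; omega
  · rcases j_dist_tri H v w with ⟨h', _⟩ | ⟨h', hd'⟩ | ⟨_, h', hd'⟩
    · exact absurd h'.symm hwv
    · rw [hd, hd']
      constructor
      · intro _; exact Or.inr ⟨h'.symm, fun hc => h hc.symm⟩
      · intro _; omega
    · rw [hd, hd']
      constructor
      · rintro (h2 | h2) <;> omega
      · rintro (⟨h1, h2⟩ | ⟨h1, h2⟩)
        · exact absurd h1.symm h
        · exact absurd h1.symm h'

lemma sr_nonadj_char {u v w : Unit ⊕ W} (hne : u ≠ v) (huv : ¬ (JG).Adj u v)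
    (hwu : w ≠ u) (hwv : w ≠ v) : ¬ StronglyResolves (JG) w u v := by
  have duv : (JG).dist u v = 2 := j_dist_nonadj H hne huv
  have dvu : (JG).dist v u = 2 := j_dist_nonadj H (Ne.symm hne) (fun hc => huv hc.symm)
  have h1 : 0 < (JG).dist u w := (j_preconnected H u w).pos_dist_of_ne (Ne.symm hwu)
  have h1' : (JG).dist u w ≤ 2 := by
    rcases j_dist_tri H u w with ⟨_, hd⟩ | ⟨_, hd⟩ | ⟨_, _, hd⟩ <;> omega
  have h2 : 0 < (JG).dist v w := (j_preconnected H v w).pos_dist_of_ne (Ne.symm hwv)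
  have h2' : (JG).dist v w ≤ 2 := by
    rcases j_dist_tri H v w with ⟨_, hd⟩ | ⟨_, hd⟩ | ⟨_, _, hd⟩ <;> omega
  unfold StronglyResolves
  rw [duv, dvu]
  omega

lemma mem_closedNbhd {a b : W} : a ∈ closedNbhd H b ↔ a = b ∨ H.Adj b a := by
  simp [closedNbhd]

end Aux

section Aux2
set_option linter.unusedSectionVars false

open SimpleGraph Finset

variable {W : Type*} [Fintype W] (H : SimpleGraph W)

local notation "JG" => joinGraph (⊥ : SimpleGraph Unit) H

lemma exists_distinguisher {u v : W} (hadj : H.Adj u v)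
    (hne : closedNbhd H u ≠ closedNbhd H v) :
    ∃ a, (H.Adj u a ∧ ¬ H.Adj v a ∧ a ≠ v) ∨ (H.Adj v a ∧ ¬ H.Adj u a ∧ a ≠ u) := by
  by_contra hcon
  push_neg at hcon
  apply hne
  ext a
  rw [mem_closedNbhd, mem_closedNbhd]
  rcases hcon a with ⟨h1, h2⟩
  constructor
  · rintro (rfl | hadj')
    · exact Or.inr hadj.symm
    · by_cases hav : a = v
      · exact Or.inl hav
      · by_cases hva : H.Adj v a
        · exact Or.inr hva
        · exact absurd (h1 hadj' hva) hav
  · rintro (rfl | hadj')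
    · exact Or.inr hadj
    · by_cases hau : a = u
      · exact Or.inl hau
      · by_cases hua : H.Adj u a
        · exact Or.inr hua
        · exact absurd (h2 hadj' hua) hau

/-- Upper bound: the complement of a twin-free clique is a strong resolving set. -/
lemma ub_srs [DecidableEq W] (X : Finset W) (hX : IsTwinFreeClique H X) :
    IsStrongResolvingSet (JG)
      ↑((Finset.univ : Finset (Unit ⊕ W)) \ X.image Sum.inr) := by
  classical
  intro u v huv
  set S : Finset (Unit ⊕ W) := Finset.univ \ X.image Sum.inr with hS
  by_cases hu : u ∈ S
  · exact ⟨u, by simpa using hu, sr_self_left H u v⟩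
  by_cases hv : v ∈ S
  · exact ⟨v, by simpa using hv, sr_self_right H u v⟩
  -- both u, v are in the image of X
  have hmem : ∀ x : Unit ⊕ W, x ∉ S → ∃ b ∈ X, Sum.inr b = x := by
    intro x hx
    simpa [hS] using hx
  obtain ⟨b, hb, rfl⟩ := hmem u hu
  obtain ⟨b', hb', rfl⟩ := hmem v hv
  have hbb' : b ≠ b' := fun hc => huv (by rw [hc])
  have hadj : H.Adj b b' := hX.1 hb hb' hbb'
  obtain ⟨a, ha⟩ := exists_distinguisher H hadj (hX.2 b hb b' hb' hbb')
  rcases ha with ⟨h1, h2, h3⟩ | ⟨h1, h2, h3⟩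
  · -- a adjacent to b, not to b'
    have haX : a ∉ X := fun hc => h2 (hX.1 hb' hc (Ne.symm h3))
    refine ⟨Sum.inr a, by simp [hS, haX], Or.inr ?_⟩
    rw [j_dist_adj H (jadj_inr_inr H |>.mpr hadj.symm),
      j_dist_adj H (jadj_inr_inr H |>.mpr h1),
      j_dist_nonadj H (fun hc => h3 (Sum.inr.inj hc).symm)
        (fun hc => h2 ((jadj_inr_inr H).mp hc))]
  · have haX : a ∉ X := fun hc => h2 (hX.1 hb hc (Ne.symm h3))
    refine ⟨Sum.inr a, by simp [hS, haX], Or.inl ?_⟩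
    rw [j_dist_adj H (jadj_inr_inr H |>.mpr hadj),
      j_dist_adj H (jadj_inr_inr H |>.mpr h1),
      j_dist_nonadj H (fun hc => h3 (Sum.inr.inj hc).symm)
        (fun hc => h2 ((jadj_inr_inr H).mp hc))]

/-- Lower bound: from a strong resolving set build a twin-free clique. -/
lemma lb_tfc [DecidableEq W] (u₀ : W) (hdom : ∀ v, v ≠ u₀ → H.Adj u₀ v)
    (S : Finset (Unit ⊕ W)) (hS : IsStrongResolvingSet (JG) ↑S) :
    ∃ Y : Finset W, IsTwinFreeClique H Y ∧
      Fintype.card W + 1 ≤ S.card + Y.card := by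
  classical
  set XW : Finset W := Finset.univ.filter (fun b => Sum.inr b ∉ S) with hXW
  have hXWmem : ∀ b : W, b ∈ XW ↔ Sum.inr b ∉ S := by intro b; simp [hXW]
  -- XW is a clique
  have hclique : ∀ b ∈ XW, ∀ b' ∈ XW, b ≠ b' → H.Adj b b' := by
    intro b hb b' hb' hne
    by_contra hnadj
    obtain ⟨w, hw, hsr⟩ := hS (Sum.inr b) (Sum.inr b') (fun hc => hne (Sum.inr.inj hc))
    have hwb : w ≠ Sum.inr b := fun hc => (hXWmem b).mp hb (hc ▸ hw)
    have hwb' : w ≠ Sum.inr b' := fun hc => (hXWmem b').mp hb' (hc ▸ hw)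
    exact sr_nonadj_char H (fun hc => hne (Sum.inr.inj hc))
      (fun hc => hnadj ((jadj_inr_inr H).mp hc)) hwb hwb' hsr
  -- XW is twin-free
  have htf : ∀ b ∈ XW, ∀ b' ∈ XW, b ≠ b' → closedNbhd H b ≠ closedNbhd H b' := by
    intro b hb b' hb' hne heq
    have hadj : H.Adj b b' := hclique b hb b' hb' hne
    obtain ⟨w, hw, hsr⟩ := hS (Sum.inr b) (Sum.inr b') (fun hc => hne (Sum.inr.inj hc))
    have hwb : w ≠ Sum.inr b := fun hc => (hXWmem b).mp hb (hc ▸ hw)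
    have hwb' : w ≠ Sum.inr b' := fun hc => (hXWmem b').mp hb' (hc ▸ hw)
    rw [sr_adj_char H ((jadj_inr_inr H).mpr hadj) hwb hwb'] at hsr
    match w, hsr with
    | Sum.inl a, Or.inl ⟨_, h2⟩ => exact h2 (jadj_inl_inr H a b')
    | Sum.inl a, Or.inr ⟨_, h2⟩ => exact h2 (jadj_inl_inr H a b)
    | Sum.inr a, Or.inl ⟨h1, h2⟩ =>
      have : a ∈ closedNbhd H b :=
        (mem_closedNbhd H).mpr (Or.inr ((jadj_inr_inr H).mp h1).symm)
      rw [heq, mem_closedNbhd] at this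
      rcases this with rfl | hc
      · exact hwb' rfl
      · exact h2 ((jadj_inr_inr H).mpr hc.symm)
    | Sum.inr a, Or.inr ⟨h1, h2⟩ =>
      have : a ∈ closedNbhd H b' :=
        (mem_closedNbhd H).mpr (Or.inr ((jadj_inr_inr H).mp h1).symm)
      rw [← heq, mem_closedNbhd] at this
      rcases this with rfl | hc
      · exact hwb rfl
      · exact h2 ((jadj_inr_inr H).mpr hc.symm)
  -- counting: univ ⊆ S ∪ XW.image inr ∪ {inl ()}
  have hcount : Fintype.card W + 1 ≤ S.card + XW.card + 1 := by
    have hsub : (Finset.univ : Finset (Unit ⊕ W)) ⊆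
        (S ∪ XW.image Sum.inr) ∪ {Sum.inl ()} := by
      rintro (⟨⟩ | b) -
      · simp
      · by_cases hb : Sum.inr b ∈ S
        · simp [hb]
        · simp [hb, (hXWmem b).mpr hb]
    have hcard := Finset.card_le_card hsub
    have h1 : ((S ∪ XW.image Sum.inr) ∪ {Sum.inl ()}).card ≤ S.card + XW.card + 1 :=
      le_trans (Finset.card_union_le _ _)
        (by
          have := le_trans (Finset.card_union_le S (XW.image Sum.inr))
            (Nat.add_le_add_left (Finset.card_image_le) S.card)
          simpa using Nat.add_le_add this (le_refl 1))
    have huniv : (Finset.univ : Finset (Unit ⊕ W)).card = Fintype.card W + 1 := by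
      simp [Fintype.card_sum]
      omega
    omega
  by_cases hc : Sum.inl () ∈ S
  · -- every vertex is in S ∪ image inr XW, so card W + 1 ≤ S.card + XW.card
    refine ⟨XW, ⟨fun x hx y hy hne => hclique x (by simpa using hx) y (by simpa using hy) hne,
      htf⟩, ?_⟩
    have hsub : (Finset.univ : Finset (Unit ⊕ W)) ⊆ S ∪ XW.image Sum.inr := by
      rintro (⟨⟩ | b) -
      · simp [hc]
      · by_cases hb : Sum.inr b ∈ S
        · simp [hb]
        · simp [hb, (hXWmem b).mpr hb]
    have hcard := Finset.card_le_card hsub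
    have h1 := le_trans (Finset.card_union_le S (XW.image Sum.inr))
      (Nat.add_le_add_left (Finset.card_image_le) S.card)
    have huniv : (Finset.univ : Finset (Unit ⊕ W)).card = Fintype.card W + 1 := by
      simp [Fintype.card_sum]; omega
    omega
  · -- inl () ∉ S; then inr u₀ ∈ S and we may add u₀ to XW
    have hu₀S : Sum.inr u₀ ∈ S := by
      by_contra hu₀
      obtain ⟨w, hw, hsr⟩ := hS (Sum.inl ()) (Sum.inr u₀) (by simp)
      have hwc : w ≠ Sum.inl () := fun hcc => hc (hcc ▸ hw)
      have hwu : w ≠ Sum.inr u₀ := fun hcc => hu₀ (hcc ▸ hw)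
      rw [sr_adj_char H (jadj_inl_inr H () u₀) hwc hwu] at hsr
      match w, hsr with
      | Sum.inl a, _ => exact hwc rfl
      | Sum.inr a, Or.inl ⟨h1, h2⟩ =>
        exact h2 ((jadj_inr_inr H).mpr
          ((hdom a (fun hcc => hwu (by rw [hcc]))).symm))
      | Sum.inr a, Or.inr ⟨h1, h2⟩ => exact h2 (jadj_inr_inl H a ())
    have hu₀XW : u₀ ∉ XW := fun hcc => (hXWmem u₀).mp hcc hu₀S
    -- no member of XW is dominating
    have hnodom : ∀ b ∈ XW, closedNbhd H b ≠ Set.univ := by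
      intro b hb hbuniv
      have hbdom : ∀ a, a ≠ b → H.Adj b a := by
        intro a hab
        have : a ∈ closedNbhd H b := hbuniv ▸ Set.mem_univ a
        rcases (mem_closedNbhd H).mp this with rfl | hadj
        · exact absurd rfl hab
        · exact hadj
      obtain ⟨w, hw, hsr⟩ := hS (Sum.inl ()) (Sum.inr b) (by simp)
      have hwc : w ≠ Sum.inl () := fun hcc => hc (hcc ▸ hw)
      have hwb : w ≠ Sum.inr b := fun hcc => (hXWmem b).mp hb (hcc ▸ hw)
      rw [sr_adj_char H (jadj_inl_inr H () b) hwc hwb] at hsr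
      match w, hsr with
      | Sum.inl a, _ => exact hwc rfl
      | Sum.inr a, Or.inl ⟨h1, h2⟩ =>
        exact h2 ((jadj_inr_inr H).mpr
          ((hbdom a (fun hcc => hwb (by rw [hcc]))).symm))
      | Sum.inr a, Or.inr ⟨h1, h2⟩ => exact h2 (jadj_inr_inl H a ())
    have hu₀univ : closedNbhd H u₀ = Set.univ := by
      ext a
      simp only [Set.mem_univ, iff_true, mem_closedNbhd]
      by_cases ha : a = u₀
      · exact Or.inl ha
      · exact Or.inr (hdom a ha)
    refine ⟨insert u₀ XW, ⟨?_, ?_⟩, ?_⟩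
    · -- clique
      intro x hx y hy hne
      simp only [Finset.coe_insert, Set.mem_insert_iff, Finset.mem_coe] at hx hy
      rcases hx with rfl | hx
      · rcases hy with rfl | hy
        · exact absurd rfl hne
        · exact hdom y (Ne.symm hne)
      · rcases hy with rfl | hy
        · exact (hdom x (hne)).symm
        · exact hclique x hx y hy hne
    · -- twin-free
      intro x hx y hy hne
      simp only [Finset.mem_insert] at hx hy
      rcases hx with rfl | hx
      · rcases hy with rfl | hy
        · exact absurd rfl hne
        · rw [hu₀univ]; exact fun hcc => hnodom y hy hcc.symm
      · rcases hy with rfl | hy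
        · rw [hu₀univ]; exact hnodom x hx
        · exact htf x hx y hy hne
    · rw [Finset.card_insert_of_notMem hu₀XW]
      omega

lemma exists_dominating [DecidableRel H.Adj]
    (h : (H.maxDegree : ℤ) = (Fintype.card W : ℤ) - 1) :
    ∃ u₀ : W, ∀ v, v ≠ u₀ → H.Adj u₀ v := by
  classical
  have hpos : 1 ≤ Fintype.card W := by
    rcases Nat.eq_zero_or_pos (Fintype.card W) with h0 | h1
    · rw [h0] at h
      have : (0:ℤ) ≤ (H.maxDegree : ℤ) := Int.ofNat_nonneg _
      omega
    · exact h1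
  have : Nonempty W := Fintype.card_pos_iff.mp hpos
  obtain ⟨u₀, hu₀⟩ := H.exists_maximal_degree_vertex
  have hdeg : H.degree u₀ = Fintype.card W - 1 := by omega
  have hsub : H.neighborFinset u₀ ⊆ Finset.univ.erase u₀ := by
    intro v hv
    rw [Finset.mem_erase]
    exact ⟨fun hcc => H.irrefl (hcc ▸ (SimpleGraph.mem_neighborFinset H u₀ v).mp hv),
      Finset.mem_univ v⟩
  have heq : H.neighborFinset u₀ = Finset.univ.erase u₀ := by
    apply Finset.eq_of_subset_of_card_le hsub
    rw [Finset.card_erase_of_mem (Finset.mem_univ u₀), Finset.card_univ]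
    rw [← SimpleGraph.card_neighborFinset_eq_degree] at hdeg
    omega
  refine ⟨u₀, fun v hv => ?_⟩
  have : v ∈ H.neighborFinset u₀ := by
    rw [heq, Finset.mem_erase]
    exact ⟨hv, Finset.mem_univ v⟩
  exact (SimpleGraph.mem_neighborFinset H u₀ v).mp this

end Aux2

/-- Let `H` be a graph of order `n₂` and maximum degree `Δ`. If
`Δ = n₂ − 1`, then `dim_s(K₁ + H) = n₂ + 1 − ϖ(H)`. -/
theorem strongDim_join_K1_of_dominant {W : Type*} [Fintype W]
    (H : SimpleGraph W) [DecidableRel H.Adj]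
    (h : (H.maxDegree : ℤ) = (Fintype.card W : ℤ) - 1) :
    strongDim (joinGraph (⊥ : SimpleGraph Unit) H) =
      Fintype.card W + 1 - twinFreeCliqueNum H := by
  classical
  obtain ⟨u₀, hdom⟩ := exists_dominating H h
  have hBdd : BddAbove {k | ∃ X : Finset W, IsTwinFreeClique H X ∧ X.card = k} :=
    ⟨Fintype.card W, by rintro k ⟨X, _, rfl⟩; exact Finset.card_le_univ X⟩
  have hNe : {k | ∃ X : Finset W, IsTwinFreeClique H X ∧ X.card = k}.Nonempty :=
    ⟨0, ⟨∅, ⟨by simp, by simp⟩, rfl⟩⟩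
  obtain ⟨X, hX, hXcard⟩ :
      ∃ X : Finset W, IsTwinFreeClique H X ∧ X.card = twinFreeCliqueNum H :=
    Nat.sSup_mem hNe hBdd
  have hw_le : twinFreeCliqueNum H ≤ Fintype.card W := hXcard ▸ Finset.card_le_univ X
  have hubmem : (Fintype.card W + 1 - twinFreeCliqueNum H) ∈
      {k | ∃ S : Finset (Unit ⊕ W),
        IsStrongResolvingSet (joinGraph (⊥ : SimpleGraph Unit) H) ↑S ∧ S.card = k} := by
    refine ⟨(Finset.univ : Finset (Unit ⊕ W)) \ X.image Sum.inr, ub_srs H X hX, ?_⟩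
    rw [Finset.card_sdiff_of_subset (Finset.subset_univ _),
      Finset.card_image_of_injective X Sum.inr_injective, Finset.card_univ, hXcard]
    simp [Fintype.card_sum]
    omega
  have hlb : ∀ k ∈ {k | ∃ S : Finset (Unit ⊕ W),
      IsStrongResolvingSet (joinGraph (⊥ : SimpleGraph Unit) H) ↑S ∧ S.card = k},
      Fintype.card W + 1 - twinFreeCliqueNum H ≤ k := by
    rintro k ⟨S, hS, rfl⟩
    obtain ⟨Y, hY, hYcard⟩ := lb_tfc H u₀ hdom S hS
    have hY2 : Y.card ≤ twinFreeCliqueNum H := le_csSup hBdd ⟨Y, hY, rfl⟩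
    omega
  exact le_antisymm (Nat.sInf_le hubmem) (le_csInf ⟨_, hubmem⟩ hlb)
end

section
/- Let H be a connected finite simple graph of order n₂ ≥ 2 and maximum degree Δ. If Δ = n₂ − 1, then dim_s(K₁ + H) = dim_s(H) + 1. -/
open SimpleGraph

section AuxSR

open SimpleGraph Finset

private lemma sr_self_left_s15 {V : Type*} (G : SimpleGraph V) (u v : V) :
    StronglyResolves G u u v :=
  Or.inr (by rw [SimpleGraph.dist_self, add_zero])

private lemma sr_self_right_s15 {V : Type*} (G : SimpleGraph V) (u v : V) :
    StronglyResolves G v u v :=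
  Or.inl (by rw [SimpleGraph.dist_self, add_zero])

private lemma sr_symm {V : Type*} {G : SimpleGraph V} {w u v : V}
    (h : StronglyResolves G w u v) : StronglyResolves G w v u :=
  h.symm

private lemma exists_universal {W : Type*} [Fintype W] (H : SimpleGraph W)
    [DecidableRel H.Adj] (hn2 : 2 ≤ Fintype.card W)
    (hd : H.maxDegree = Fintype.card W - 1) :
    ∃ x : W, ∀ w : W, w ≠ x → H.Adj x w := by
  classical
  have : Nonempty W := Fintype.card_pos_iff.mp (by omega)
  obtain ⟨x, hx⟩ := H.exists_maximal_degree_vertex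
  refine ⟨x, fun w hw => ?_⟩
  have hdeg : H.degree x = Fintype.card W - 1 := by rw [← hx, hd]
  have hsub : H.neighborFinset x ⊆ Finset.univ.erase x := fun y hy =>
    Finset.mem_erase.mpr ⟨((H.mem_neighborFinset x y).mp hy).ne', Finset.mem_univ y⟩
  have hcard : (Finset.univ.erase x).card ≤ (H.neighborFinset x).card := by
    rw [Finset.card_erase_of_mem (Finset.mem_univ x), Finset.card_univ,
      H.card_neighborFinset_eq_degree, hdeg]
  have heq := Finset.eq_of_subset_of_card_le hsub hcard
  have hmem : w ∈ H.neighborFinset x := heq ▸ Finset.mem_erase.mpr ⟨hw, Finset.mem_univ w⟩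
  exact (H.mem_neighborFinset x w).mp hmem

private lemma distH_two {W : Type*} {H : SimpleGraph W}
    (hH : H.Connected) {x : W} (hx : ∀ w : W, w ≠ x → H.Adj x w)
    {u v : W} (huv : u ≠ v) (hna : ¬ H.Adj u v) : H.dist u v = 2 := by
  have hux : u ≠ x := by rintro rfl; exact hna (hx v (Ne.symm huv))
  have hvx : v ≠ x := by rintro rfl; exact hna ((hx u huv).symm)
  let p : H.Walk u v :=
    SimpleGraph.Walk.cons ((hx u hux).symm) (SimpleGraph.Walk.cons (hx v hvx) SimpleGraph.Walk.nil)
  have h2 : H.dist u v ≤ 2 := le_trans (SimpleGraph.dist_le p) (by simp [p])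
  have h0 : 0 < H.dist u v := hH.pos_dist_of_ne huv
  have h1 : H.dist u v ≠ 1 := fun h => hna (SimpleGraph.dist_eq_one_iff_adj.mp h)
  omega

private lemma dist_join_inl_inr {W : Type*} (H : SimpleGraph W) (a : Unit) (b : W) :
    (joinGraph (⊥ : SimpleGraph Unit) H).dist (Sum.inl a) (Sum.inr b) = 1 :=
  SimpleGraph.dist_eq_one_iff_adj.mpr trivial

private lemma dist_join_inr_inl {W : Type*} (H : SimpleGraph W) (a : Unit) (b : W) :
    (joinGraph (⊥ : SimpleGraph Unit) H).dist (Sum.inr b) (Sum.inl a) = 1 := by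
  rw [SimpleGraph.dist_comm]; exact dist_join_inl_inr H a b

private lemma dist_join_inr_inr {W : Type*} {H : SimpleGraph W}
    (hH : H.Connected) {x : W} (hx : ∀ w : W, w ≠ x → H.Adj x w) (a b : W) :
    (joinGraph (⊥ : SimpleGraph Unit) H).dist (Sum.inr a) (Sum.inr b) = H.dist a b := by
  by_cases hab : a = b
  · subst hab; rw [SimpleGraph.dist_self, SimpleGraph.dist_self]
  by_cases hadj : H.Adj a b
  · rw [SimpleGraph.dist_eq_one_iff_adj.mpr hadj,
      SimpleGraph.dist_eq_one_iff_adj.mpr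
        (show (joinGraph (⊥ : SimpleGraph Unit) H).Adj (Sum.inr a) (Sum.inr b) from hadj)]
  · rw [distH_two hH hx hab hadj]
    set J := joinGraph (⊥ : SimpleGraph Unit) H with hJ
    let p : J.Walk (Sum.inr a) (Sum.inr b) :=
      SimpleGraph.Walk.cons (show J.Adj (Sum.inr a) (Sum.inl ()) from trivial)
        (SimpleGraph.Walk.cons (show J.Adj (Sum.inl ()) (Sum.inr b) from trivial)
          SimpleGraph.Walk.nil)
    have h2 : J.dist (Sum.inr a) (Sum.inr b) ≤ 2 := le_trans (SimpleGraph.dist_le p) (by simp [p])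
    have h0 : J.dist (Sum.inr a) (Sum.inr b) ≠ 0 := by
      rw [SimpleGraph.dist_ne_zero_iff_ne_and_reachable]
      exact ⟨by simp [hab], p.reachable⟩
    have h1 : J.dist (Sum.inr a) (Sum.inr b) ≠ 1 := fun h =>
      hadj ((SimpleGraph.dist_eq_one_iff_adj (G := J)).mp h)
    omega

private lemma sr_join_inr_iff {W : Type*} {H : SimpleGraph W}
    (hH : H.Connected) {x : W} (hx : ∀ w : W, w ≠ x → H.Adj x w) (s u v : W) :
    StronglyResolves (joinGraph (⊥ : SimpleGraph Unit) H) (Sum.inr s) (Sum.inr u) (Sum.inr v)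
      ↔ StronglyResolves H s u v := by
  unfold StronglyResolves
  simp only [dist_join_inr_inr hH hx]

private lemma not_sr_inl {W : Type*} {H : SimpleGraph W}
    (hH : H.Connected) {x : W} (hx : ∀ w : W, w ≠ x → H.Adj x w)
    {u v : W} (huv : u ≠ v) (a : Unit) :
    ¬ StronglyResolves (joinGraph (⊥ : SimpleGraph Unit) H) (Sum.inl a) (Sum.inr u) (Sum.inr v) := by
  unfold StronglyResolves
  rw [dist_join_inr_inl, dist_join_inr_inl, dist_join_inr_inr hH hx, dist_join_inr_inr hH hx]
  have h1 : 0 < H.dist u v := hH.pos_dist_of_ne huv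
  have h2 : 0 < H.dist v u := hH.pos_dist_of_ne (Ne.symm huv)
  omega

private lemma strongDim_spec {V : Type*} [Fintype V] (G : SimpleGraph V) :
    ∃ S : Finset V, IsStrongResolvingSet G ↑S ∧ S.card = strongDim G := by
  have hne : {k | ∃ S : Finset V, IsStrongResolvingSet G ↑S ∧ S.card = k}.Nonempty :=
    ⟨Finset.univ.card, Finset.univ, fun u v _ => ⟨u, by simp, sr_self_left_s15 G u v⟩, rfl⟩
  obtain ⟨S, hS, hc⟩ := Nat.sInf_mem hne
  exact ⟨S, hS, hc⟩

private lemma strongDim_le' {V : Type*} [Fintype V] (G : SimpleGraph V) {S : Finset V}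
    (h : IsStrongResolvingSet G ↑S) : strongDim G ≤ S.card :=
  Nat.sInf_le ⟨S, h, rfl⟩

end AuxSR

/-- Let `H` be a connected graph of order `n₂ ≥ 2` and maximum degree
`Δ = n₂ − 1`. Then `dim_s(K₁ + H) = dim_s(H) + 1`. -/
theorem strongDim_join_K1_eq_strongDim_add_one {W : Type*} [Fintype W]
    (H : SimpleGraph W) [DecidableRel H.Adj] (hH : H.Connected)
    (hn2 : 2 ≤ Fintype.card W) (hd : H.maxDegree = Fintype.card W - 1) :
    strongDim (joinGraph (⊥ : SimpleGraph Unit) H) = strongDim H + 1 := by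
  classical
  obtain ⟨x, hx⟩ := exists_universal H hn2 hd
  set J := joinGraph (⊥ : SimpleGraph Unit) H with hJ
  -- Upper bound
  obtain ⟨S, hS, hScard⟩ := strongDim_spec H
  have hup : strongDim J ≤ strongDim H + 1 := by
    have hres : IsStrongResolvingSet J ↑(insert (Sum.inl ()) (S.image Sum.inr) : Finset (Unit ⊕ W)) := by
      rintro (⟨⟩ | u) (⟨⟩ | v) hne
      · exact absurd rfl hne
      · exact ⟨Sum.inl (), by simp, sr_self_left_s15 J _ _⟩
      · exact ⟨Sum.inl (), by simp, sr_self_right_s15 J _ _⟩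
      · have huv : u ≠ v := fun h => hne (by rw [h])
        obtain ⟨s, hsS, hs⟩ := hS u v huv
        refine ⟨Sum.inr s, ?_, (sr_join_inr_iff hH hx s u v).mpr hs⟩
        simp only [Finset.coe_insert, Finset.coe_image, Set.mem_insert_iff, Set.mem_image]
        exact Or.inr ⟨s, hsS, rfl⟩
    have h1 := strongDim_le' J hres
    have h2 := Finset.card_insert_le (Sum.inl () : Unit ⊕ W) (S.image Sum.inr)
    have h3 := Finset.card_image_le (s := S) (f := (Sum.inr : W → Unit ⊕ W))
    omega
  -- Lower bound
  obtain ⟨S', hS', hS'card⟩ := strongDim_spec J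
  set T : Finset W := S'.preimage Sum.inr (Sum.inr_injective.injOn) with hT
  have hTmem : ∀ s : W, s ∈ T ↔ Sum.inr s ∈ S' := fun s => Finset.mem_preimage
  have hTsub : T.image Sum.inr ⊆ S' := by
    intro y hy
    obtain ⟨t, ht, rfl⟩ := Finset.mem_image.mp hy
    exact (hTmem t).mp ht
  -- every resolver of an inr-pair comes from T and resolves in H
  have hA : ∀ u v : W, u ≠ v → ∃ s ∈ T, StronglyResolves H s u v ∧
      Sum.inr s ∈ S' := by
    intro u v huv
    obtain ⟨w, hw, hres⟩ := hS' (Sum.inr u) (Sum.inr v) (by simp [huv])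
    match w with
    | Sum.inl a => exact absurd hres (not_sr_inl hH hx huv a)
    | Sum.inr s =>
      have hsS : Sum.inr s ∈ S' := Finset.mem_coe.mp hw
      exact ⟨s, (hTmem s).mpr hsS, (sr_join_inr_iff hH hx s u v).mp hres, hsS⟩
  have hlow : strongDim H + 1 ≤ strongDim J := by
    by_cases hinl : (Sum.inl () : Unit ⊕ W) ∈ S'
    · -- T is a strong resolving set for H
      have hTres : IsStrongResolvingSet H ↑T := by
        intro u v huv
        obtain ⟨s, hsT, hs, -⟩ := hA u v huv
        exact ⟨s, Finset.mem_coe.mpr hsT, hs⟩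
      have h1 := strongDim_le' H hTres
      have hsub2 : (insert (Sum.inl ()) (T.image Sum.inr) : Finset (Unit ⊕ W)) ⊆ S' := by
        intro y hy
        rcases Finset.mem_insert.mp hy with h | h
        · exact h ▸ hinl
        · exact hTsub h
      have h2 := Finset.card_le_card hsub2
      have h3 : (insert (Sum.inl ()) (T.image Sum.inr) : Finset (Unit ⊕ W)).card = T.card + 1 := by
        rw [Finset.card_insert_of_notMem (by simp),
          Finset.card_image_of_injective _ Sum.inr_injective]
      omega
    · -- x ∈ T
      have hxT : x ∈ T := by
        obtain ⟨w, hw, hres⟩ := hS' (Sum.inl ()) (Sum.inr x) (by simp)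
        match w with
        | Sum.inl a => exact absurd (Finset.mem_coe.mp hw) hinl
        | Sum.inr s =>
          have hsS : Sum.inr s ∈ S' := Finset.mem_coe.mp hw
          have hsx : s = x := by
            by_contra hsx
            unfold StronglyResolves at hres
            rw [dist_join_inl_inr, dist_join_inl_inr, dist_join_inr_inl,
              dist_join_inr_inr hH hx] at hres
            have : H.dist x s = 1 := SimpleGraph.dist_eq_one_iff_adj.mpr (hx s hsx)
            omega
          exact (hTmem x).mpr (hsx ▸ hsS)
      -- helper: resolving pairs (u, x)
      have hC : ∀ u : W, u ≠ x → ∃ s ∈ T.erase x, StronglyResolves H s u x := by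
        intro u hux
        obtain ⟨w, hw, hres⟩ := hS' (Sum.inl ()) (Sum.inr u) (by simp)
        match w with
        | Sum.inl a => exact absurd (Finset.mem_coe.mp hw) hinl
        | Sum.inr t =>
          have htS : Sum.inr t ∈ S' := Finset.mem_coe.mp hw
          have htT : t ∈ T := (hTmem t).mpr htS
          unfold StronglyResolves at hres
          rw [dist_join_inl_inr, dist_join_inl_inr, dist_join_inr_inl,
            dist_join_inr_inr hH hx] at hres
          rcases hres with h | h
          · have hut : H.dist u t = 0 := by omega
            have : u = t := (hH.dist_eq_zero_iff).mp hut
            subst this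
            exact ⟨u, Finset.mem_erase.mpr ⟨hux, htT⟩, sr_self_left_s15 H u x⟩
          · have hut : H.dist u t = 2 := by omega
            have htx : t ≠ x := by
              rintro rfl
              have : H.dist u t = 1 :=
                SimpleGraph.dist_eq_one_iff_adj.mpr ((hx u hux).symm)
              omega
            refine ⟨t, Finset.mem_erase.mpr ⟨htx, htT⟩, Or.inl ?_⟩
            rw [hut, SimpleGraph.dist_eq_one_iff_adj.mpr ((hx u hux).symm),
              SimpleGraph.dist_eq_one_iff_adj.mpr (hx t htx)]
      have hTres : IsStrongResolvingSet H ↑(T.erase x) := by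
        intro u v huv
        by_cases hux : u = x
        · subst hux
          obtain ⟨s, hs, hres⟩ := hC v (Ne.symm huv)
          exact ⟨s, Finset.mem_coe.mpr hs, sr_symm hres⟩
        by_cases hvx : v = x
        · subst hvx
          obtain ⟨s, hs, hres⟩ := hC u hux
          exact ⟨s, Finset.mem_coe.mpr hs, hres⟩
        obtain ⟨s, hsT, hs, -⟩ := hA u v huv
        have hsx : s ≠ x := by
          rintro rfl
          unfold StronglyResolves at hs
          rw [SimpleGraph.dist_eq_one_iff_adj.mpr ((hx u hux).symm),
            SimpleGraph.dist_eq_one_iff_adj.mpr ((hx v hvx).symm)] at hs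
          have h1 : 0 < H.dist u v := hH.pos_dist_of_ne huv
          have h2 : 0 < H.dist v u := hH.pos_dist_of_ne (Ne.symm huv)
          omega
        exact ⟨s, Finset.mem_coe.mpr (Finset.mem_erase.mpr ⟨hsx, hsT⟩), hs⟩
      have h1 := strongDim_le' H hTres
      have h2 : (T.erase x).card = T.card - 1 := Finset.card_erase_of_mem hxT
      have h3 : T.card ≤ S'.card := by
        calc T.card = (T.image Sum.inr).card :=
              (Finset.card_image_of_injective _ Sum.inr_injective).symm
          _ ≤ S'.card := Finset.card_le_card hTsub
      have h4 : 1 ≤ T.card := Finset.card_pos.mpr ⟨x, hxT⟩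
      omega
  omega
end

section
/- Let G be a connected finite simple graph of order n₁ and let H be a connected finite simple graph of order n₂ ≥ 2, of diameter two, with maximum degree Δ. If Δ ≤ n₂ − 2 or n₁ ≥ 2, then dim_s(G ⊙ H) = (n₁ − 1)·n₂ + dim_s(H). -/
open SimpleGraph

namespace CoronaAux

open SimpleGraph Sum

variable {V W : Type*} (G : SimpleGraph V) (H : SimpleGraph W)

open scoped Classical in
/-- Candidate distance function on the corona product. -/
noncomputable def cd : V ⊕ V × W → V ⊕ V × W → ℕ
  | inl a, inl b => G.dist a b
  | inl a, inr q => G.dist a q.1 + 1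
  | inr p, inl b => G.dist p.1 b + 1
  | inr p, inr q => if p.1 = q.1 then min (H.dist p.2 q.2) 2 else G.dist p.1 q.1 + 2

variable {G H}

lemma cd_self (x : V ⊕ V × W) : cd G H x x = 0 := by
  cases x with
  | inl a => simp [cd, SimpleGraph.dist_self]
  | inr p => simp [cd, SimpleGraph.dist_self]

lemma cd_step (hG : G.Connected) (hH : H.Connected) :
    ∀ {x y : V ⊕ V × W}, (corona G H).Adj x y → ∀ z, cd G H x z ≤ cd G H y z + 1 := by
  rintro (a | ⟨a, h⟩) (b | ⟨b, k⟩) hxy (c | ⟨c, m⟩)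
  · have hab : G.Adj a b := hxy
    have h1 : G.dist a b = 1 := SimpleGraph.dist_eq_one_iff_adj.mpr hab
    have h2 := hG.dist_triangle (u := a) (v := b) (w := c)
    simp only [cd]; omega
  · have hab : G.Adj a b := hxy
    have h1 : G.dist a b = 1 := SimpleGraph.dist_eq_one_iff_adj.mpr hab
    have h2 := hG.dist_triangle (u := a) (v := b) (w := c)
    simp only [cd]; omega
  · have hab : a = b := hxy
    subst hab
    simp only [cd]; omega
  · have hab : a = b := hxy
    subst hab
    simp only [cd]
    split_ifs with hac
    · subst hac
      simp only [SimpleGraph.dist_self]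
      omega
    · omega
  · have hab : a = b := hxy
    subst hab
    simp only [cd]; omega
  · have hab : a = b := hxy
    subst hab
    simp only [cd]
    split_ifs with hac
    · subst hac
      simp only [SimpleGraph.dist_self]
      omega
    · omega
  · obtain ⟨hab, -⟩ := hxy
    have hab' : a = b := hab
    subst hab'
    simp only [cd]; omega
  · obtain ⟨hab, hk⟩ := hxy
    have hab' : a = b := hab
    subst hab'
    have h1 : H.Adj h k := hk
    have h1' : H.dist h k = 1 := SimpleGraph.dist_eq_one_iff_adj.mpr h1
    have h2 := hH.dist_triangle (u := h) (v := k) (w := m)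
    have h3 := hH.dist_triangle (u := k) (v := h) (w := m)
    have h4 : H.dist h k = H.dist k h := SimpleGraph.dist_comm
    simp only [cd]
    split_ifs with hac
    · omega
    · omega

lemma cd_le_length (hG : G.Connected) (hH : H.Connected) :
    ∀ {x y : V ⊕ V × W} (p : (corona G H).Walk x y), cd G H x y ≤ p.length := by
  intro x y p
  induction p with
  | nil => simp [cd_self]
  | cons hadj q ih =>
      simp only [SimpleGraph.Walk.length_cons]
      exact (cd_step hG hH hadj _).trans (Nat.add_le_add_right ih 1)

variable (G H)

/-- The embedding of `G` into the corona product. -/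
def homInl : G →g corona G H where
  toFun := inl
  map_rel' := fun h => h

/-- The embedding of the `a`-th copy of `H` into the corona product. -/
def homCopy (a : V) : H →g corona G H where
  toFun := fun w => inr (a, w)
  map_rel' := fun h => ⟨rfl, h⟩

lemma adj_inl_inr (a : V) (h : W) : (corona G H).Adj (inl a) (inr (a, h)) := rfl

lemma adj_inr_inl (a : V) (h : W) : (corona G H).Adj (inr (a, h)) (inl a) := rfl

variable {G H}

lemma dist_inl_inl (hG : G.Connected) (hH : H.Connected) (a b : V) :
    (corona G H).dist (inl a) (inl b) = G.dist a b := by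
  obtain ⟨p, hp⟩ := hG.exists_walk_length_eq_dist a b
  have key : ∃ w : (corona G H).Walk (inl a) (inl b), w.length = G.dist a b := by
    refine ⟨p.map (homInl G H), ?_⟩
    exact (SimpleGraph.Walk.length_map _ _).trans hp
  obtain ⟨w, hw⟩ := key
  have hup := SimpleGraph.dist_le w
  obtain ⟨q, hq⟩ := w.reachable.exists_walk_length_eq_dist
  have hlow := cd_le_length hG hH q
  simp only [cd] at hlow
  omega

lemma dist_inl_inr (hG : G.Connected) (hH : H.Connected) (a b : V) (k : W) :
    (corona G H).dist (inl a) (inr (b, k)) = G.dist a b + 1 := by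
  obtain ⟨p, hp⟩ := hG.exists_walk_length_eq_dist a b
  have key : ∃ w : (corona G H).Walk (inl a) (inr (b, k)),
      w.length = G.dist a b + 1 := by
    refine ⟨(p.map (homInl G H)).concat (adj_inl_inr G H b k), ?_⟩
    exact (SimpleGraph.Walk.length_concat _ _).trans
      (congrArg (· + 1) ((SimpleGraph.Walk.length_map _ _).trans hp))
  obtain ⟨w, hw⟩ := key
  have hup := SimpleGraph.dist_le w
  obtain ⟨q, hq⟩ := w.reachable.exists_walk_length_eq_dist
  have hlow := cd_le_length hG hH q
  simp only [cd] at hlow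
  omega

lemma dist_inr_inl (hG : G.Connected) (hH : H.Connected) (a b : V) (k : W) :
    (corona G H).dist (inr (b, k)) (inl a) = G.dist b a + 1 := by
  rw [SimpleGraph.dist_comm, dist_inl_inr hG hH a b k, SimpleGraph.dist_comm]

lemma dist_inr_inr_ne (hG : G.Connected) (hH : H.Connected) {a b : V} (hab : a ≠ b)
    (h k : W) : (corona G H).dist (inr (a, h)) (inr (b, k)) = G.dist a b + 2 := by
  obtain ⟨p, hp⟩ := hG.exists_walk_length_eq_dist a b
  have key : ∃ w : (corona G H).Walk (inr (a, h)) (inr (b, k)),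
      w.length = G.dist a b + 2 := by
    refine ⟨SimpleGraph.Walk.cons (adj_inr_inl G H a h)
      ((p.map (homInl G H)).concat (adj_inl_inr G H b k)), ?_⟩
    exact (SimpleGraph.Walk.length_cons _ _).trans
      (congrArg (· + 1) ((SimpleGraph.Walk.length_concat _ _).trans
        (congrArg (· + 1) ((SimpleGraph.Walk.length_map _ _).trans hp))))
  obtain ⟨w, hw⟩ := key
  have hup := SimpleGraph.dist_le w
  obtain ⟨q, hq⟩ := w.reachable.exists_walk_length_eq_dist
  have hlow := cd_le_length hG hH q
  simp only [cd, if_neg hab] at hlow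
  omega

lemma dist_inr_inr_same (hG : G.Connected) (hH : H.Connected) (a : V) (h k : W) :
    (corona G H).dist (inr (a, h)) (inr (a, k)) = min (H.dist h k) 2 := by
  obtain ⟨p, hp⟩ := hH.exists_walk_length_eq_dist h k
  have hup1 : (corona G H).dist (inr (a, h)) (inr (a, k)) ≤ H.dist h k := by
    have key : ∃ w : (corona G H).Walk (inr (a, h)) (inr (a, k)),
        w.length = H.dist h k := by
      refine ⟨p.map (homCopy G H a), ?_⟩
      exact (SimpleGraph.Walk.length_map _ _).trans hp
    obtain ⟨w, hw⟩ := key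
    have := SimpleGraph.dist_le w
    omega
  have key2 : ∃ w : (corona G H).Walk (inr (a, h)) (inr (a, k)), w.length = 2 := by
    refine ⟨SimpleGraph.Walk.cons (adj_inr_inl G H a h)
      (SimpleGraph.Walk.cons (adj_inl_inr G H a k) SimpleGraph.Walk.nil), ?_⟩
    simp
  obtain ⟨w2, hw2⟩ := key2
  have hup2 : (corona G H).dist (inr (a, h)) (inr (a, k)) ≤ 2 :=
    hw2 ▸ SimpleGraph.dist_le w2
  obtain ⟨q, hq⟩ := w2.reachable.exists_walk_length_eq_dist
  have hcd : cd G H (inr (a, h)) (inr (a, k)) = min (H.dist h k) 2 := by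
    simp [cd]
  have hlow := cd_le_length hG hH q
  rw [hcd, hq] at hlow
  exact le_antisymm (le_min hup1 hup2) hlow

end CoronaAux
namespace CoronaAux

open SimpleGraph Sum

lemma sr_of_left {α : Type*} {G : SimpleGraph α} {w u v : α}
    (h : G.dist u w = G.dist u v + G.dist v w) : StronglyResolves G w u v := Or.inl h

lemma sr_of_right {α : Type*} {G : SimpleGraph α} {w u v : α}
    (h : G.dist v w = G.dist v u + G.dist u w) : StronglyResolves G w u v := Or.inr h

lemma stronglyResolves_comm {α : Type*} {G : SimpleGraph α} {w u v : α}
    (h : StronglyResolves G w u v) : StronglyResolves G w v u := Or.symm h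

lemma stronglyResolves_self_right {α : Type*} (G : SimpleGraph α) (u v : α) :
    StronglyResolves G v u v := by
  simp [StronglyResolves, SimpleGraph.dist_self]

lemma stronglyResolves_self_left {α : Type*} (G : SimpleGraph α) (u v : α) :
    StronglyResolves G u u v := by
  simp [StronglyResolves, SimpleGraph.dist_self]

lemma univ_srs {α : Type*} [Fintype α] (G : SimpleGraph α) :
    IsStrongResolvingSet G ↑(Finset.univ : Finset α) := by
  intro u v _
  exact ⟨v, by simp, stronglyResolves_self_right G u v⟩

lemma strongDim_set_nonempty {α : Type*} [Fintype α] (G : SimpleGraph α) :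
    {k | ∃ S : Finset α, IsStrongResolvingSet G ↑S ∧ S.card = k}.Nonempty :=
  ⟨_, Finset.univ, univ_srs G, rfl⟩

lemma exists_min_srs {α : Type*} [Fintype α] (G : SimpleGraph α) :
    ∃ S : Finset α, IsStrongResolvingSet G ↑S ∧ S.card = strongDim G :=
  Nat.sInf_mem (strongDim_set_nonempty G)

lemma strongDim_le_card {α : Type*} [Fintype α] {G : SimpleGraph α} {S : Finset α}
    (hS : IsStrongResolvingSet G ↑S) : strongDim G ≤ S.card :=
  Nat.sInf_le ⟨S, hS, rfl⟩

lemma exists_nonadj {α : Type*} [Fintype α] {H : SimpleGraph α} [DecidableRel H.Adj]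
    (hΔ : H.maxDegree ≤ Fintype.card α - 2) (hn : 2 ≤ Fintype.card α) (v : α) :
    ∃ x, x ≠ v ∧ ¬ H.Adj v x := by
  classical
  by_contra hc
  push_neg at hc
  have hsub : (Finset.univ : Finset α) ⊆ insert v (H.neighborFinset v) := by
    intro x _
    by_cases hx : x = v
    · simp [hx]
    · simp [SimpleGraph.mem_neighborFinset, hc x hx, hx]
  have h1 := Finset.card_le_card hsub
  rw [Finset.card_univ] at h1
  have h2 := Finset.card_insert_le v (H.neighborFinset v)
  rw [SimpleGraph.card_neighborFinset_eq_degree] at h2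
  have h3 := H.degree_le_maxDegree v
  omega

lemma dist_eq_two {α : Type*} {H : SimpleGraph α} (hH : H.Connected) {u v : α}
    (hne : u ≠ v) (hadj : ¬ H.Adj u v) (hle : H.dist u v ≤ 2) : H.dist u v = 2 := by
  have h0 := hH.pos_dist_of_ne hne
  have h1 : H.dist u v ≠ 1 := fun hc => hadj (SimpleGraph.dist_eq_one_iff_adj.mp hc)
  omega

lemma exists_dist_two_mem {α : Type*} [Fintype α] {H : SimpleGraph α}
    [DecidableRel H.Adj] (hH : H.Connected) (hd2 : ∀ x y : α, H.dist x y ≤ 2)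
    (hΔ : H.maxDegree ≤ Fintype.card α - 2) (hn : 2 ≤ Fintype.card α)
    {T : Finset α} (hT : IsStrongResolvingSet H ↑T) {v : α} (hv : v ∉ T) :
    ∃ t ∈ T, H.dist v t = 2 := by
  by_contra hc
  push_neg at hc
  have hadjT : ∀ t ∈ T, H.Adj v t := by
    intro t ht
    have h2 := hc t ht
    have hle := hd2 v t
    have htv : t ≠ v := fun h => hv (h ▸ ht)
    by_contra hna
    exact h2 (dist_eq_two hH (Ne.symm htv) hna hle)
  obtain ⟨x, hxv, hxadj⟩ := exists_nonadj hΔ hn v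
  obtain ⟨w, hwT, hres⟩ := hT v x (Ne.symm hxv)
  have hwT' : w ∈ T := hwT
  have hw1 : H.dist v w = 1 := SimpleGraph.dist_eq_one_iff_adj.mpr (hadjT w hwT')
  have hvx : H.dist v x = 2 := dist_eq_two hH (Ne.symm hxv) hxadj (hd2 v x)
  have hxw := hd2 x w
  have hcomm : H.dist x v = H.dist v x := SimpleGraph.dist_comm
  unfold StronglyResolves at hres
  omega

end CoronaAux
open CoronaAux Sum in
/-- Let `G` be a connected graph of order `n₁` and `H` a connected graph
of order `n₂ ≥ 2`, of diameter two, with maximum degree `Δ`. If `Δ ≤ n₂ − 2` or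
`n₁ ≥ 2`, then `dim_s(G ⊙ H) = (n₁ − 1)·n₂ + dim_s(H)`. -/
theorem strongDim_corona_of_diam_two {V W : Type*} [Fintype V] [Fintype W]
    (G : SimpleGraph V) (H : SimpleGraph W) [DecidableRel H.Adj]
    (hG : G.Connected) (hH : H.Connected) (hn2 : 2 ≤ Fintype.card W)
    (hdiam : H.diam = 2)
    (h : H.maxDegree ≤ Fintype.card W - 2 ∨ 2 ≤ Fintype.card V) :
    strongDim (corona G H) =
      (Fintype.card V - 1) * Fintype.card W + strongDim H := by
  classical
  obtain ⟨g₀⟩ : Nonempty V := hG.nonempty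
  obtain ⟨k₀⟩ : Nonempty W := hH.nonempty
  have hd2 : ∀ x y : W, H.dist x y ≤ 2 := by
    intro x y
    have h1 := SimpleGraph.dist_le_diam (G := H)
      (SimpleGraph.ediam_ne_top_of_diam_ne_zero (by rw [hdiam]; norm_num)) (u := x) (v := y)
    rw [hdiam] at h1
    exact h1
  have e1 : ∀ a b : V, (corona G H).dist (inl a) (inl b) = G.dist a b :=
    dist_inl_inl hG hH
  have e2 : ∀ (a b : V) (k : W),
      (corona G H).dist (inl a) (inr (b, k)) = G.dist a b + 1 := dist_inl_inr hG hH
  have e2' : ∀ (a b : V) (k : W),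
      (corona G H).dist (inr (b, k)) (inl a) = G.dist b a + 1 := dist_inr_inl hG hH
  have e3 : ∀ (a b : V), a ≠ b → ∀ (x y : W),
      (corona G H).dist (inr (a, x)) (inr (b, y)) = G.dist a b + 2 :=
    fun a b hab x y => dist_inr_inr_ne hG hH hab x y
  have e4 : ∀ (a : V) (x y : W),
      (corona G H).dist (inr (a, x)) (inr (a, y)) = H.dist x y := by
    intro a x y
    rw [dist_inr_inr_same hG hH, min_eq_left (hd2 x y)]
  obtain ⟨T, hT, hTcard⟩ := exists_min_srs H
  -- the candidate strong resolving set of the corona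
  set P : Finset (V × W) := ((Finset.univ.erase g₀) ×ˢ Finset.univ) ∪ ({g₀} ×ˢ T)
    with hP
  set S : Finset (V ⊕ V × W) := P.image inr with hS
  have hinS1 : ∀ (g : V) (t : W), g ≠ g₀ → inr (g, t) ∈ S := by
    intro g t hg
    refine Finset.mem_image.mpr ⟨(g, t), ?_, rfl⟩
    exact Finset.mem_union_left _ (Finset.mem_product.mpr
      ⟨Finset.mem_erase.mpr ⟨hg, Finset.mem_univ g⟩, Finset.mem_univ t⟩)
  have hinS2 : ∀ t ∈ T, inr (g₀, t) ∈ S := by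
    intro t ht
    refine Finset.mem_image.mpr ⟨(g₀, t), ?_, rfl⟩
    exact Finset.mem_union_right _ (Finset.mem_product.mpr
      ⟨Finset.mem_singleton_self g₀, ht⟩)
  have hcardS : S.card = (Fintype.card V - 1) * Fintype.card W + strongDim H := by
    rw [hS, Finset.card_image_of_injective _ Sum.inr_injective, hP,
      Finset.card_union_of_disjoint, Finset.card_product, Finset.card_product,
      Finset.card_erase_of_mem (Finset.mem_univ g₀), Finset.card_univ,
      Finset.card_univ, Finset.card_singleton, one_mul, hTcard]
    rw [Finset.disjoint_left]
    rintro ⟨a, b⟩ hab hab'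
    rw [Finset.mem_product, Finset.mem_erase] at hab
    rw [Finset.mem_product, Finset.mem_singleton] at hab'
    exact hab.1.1 hab'.1
  -- resolving pairs (inl, inl)
  have keyII : ∀ (a b : V), a ≠ b → ∃ w ∈ (S : Set (V ⊕ V × W)),
      StronglyResolves (corona G H) w (inl a) (inl b) := by
    intro a b hab
    by_cases hb : b = g₀
    · rw [hb]
      rw [hb] at hab
      have ha : a ≠ g₀ := hab
      refine ⟨inr (a, k₀), Finset.mem_coe.mpr (hinS1 a k₀ ha), sr_of_right ?_⟩
      rw [e2 g₀ a k₀, e1 g₀ a, e2 a a k₀, SimpleGraph.dist_self]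
    · refine ⟨inr (b, k₀), Finset.mem_coe.mpr (hinS1 b k₀ hb), sr_of_left ?_⟩
      rw [e2 a b k₀, e1 a b, e2 b b k₀, SimpleGraph.dist_self]
  -- resolving pairs (inl, inr)
  have keyIR : ∀ (a b : V) (k : W), ∃ w ∈ (S : Set (V ⊕ V × W)),
      StronglyResolves (corona G H) w (inl a) (inr (b, k)) := by
    intro a b k
    by_cases hb : b = g₀
    · rw [hb]
      by_cases hk : k ∈ T
      · exact ⟨inr (g₀, k), Finset.mem_coe.mpr (hinS2 k hk),
          stronglyResolves_self_right _ _ _⟩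
      · by_cases ha : a = g₀
        · rw [ha]
          by_cases hcard : ∃ g₁, g₁ ≠ g₀
          · obtain ⟨g₁, hg₁⟩ := hcard
            refine ⟨inr (g₁, k₀), Finset.mem_coe.mpr (hinS1 g₁ k₀ hg₁), sr_of_right ?_⟩
            rw [e3 g₀ g₁ (Ne.symm hg₁) k k₀, e2' g₀ g₀ k, e2 g₀ g₁ k₀,
              SimpleGraph.dist_self]
            omega
          · push_neg at hcard
            have hΔ : H.maxDegree ≤ Fintype.card W - 2 := by
              rcases h with h | h
              · exact h
              · exfalso
                have hV1 : Fintype.card V = 1 :=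
                  Fintype.card_eq_one_iff.mpr ⟨g₀, fun g => hcard g⟩
                omega
            obtain ⟨t, htT, htd⟩ := exists_dist_two_mem hH hd2 hΔ hn2 hT hk
            refine ⟨inr (g₀, t), Finset.mem_coe.mpr (hinS2 t htT), sr_of_right ?_⟩
            rw [e4 g₀ k t, e2' g₀ g₀ k, e2 g₀ g₀ t, SimpleGraph.dist_self, htd]
        · refine ⟨inr (a, k₀), Finset.mem_coe.mpr (hinS1 a k₀ ha), sr_of_right ?_⟩
          rw [e3 g₀ a (fun hc => ha hc.symm) k k₀, e2' a g₀ k, e2 a a k₀,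
            SimpleGraph.dist_self]
    · exact ⟨inr (b, k), Finset.mem_coe.mpr (hinS1 b k hb),
        stronglyResolves_self_right _ _ _⟩
  -- resolving pairs (inr, inr)
  have keyRR : ∀ (a b : V) (x y : W), inr (a, x) ≠ (inr (b, y) : V ⊕ V × W) →
      ∃ w ∈ (S : Set (V ⊕ V × W)),
        StronglyResolves (corona G H) w (inr (a, x)) (inr (b, y)) := by
    intro a b x y hne
    by_cases hab : a = b
    · subst hab
      have hxy : x ≠ y := fun hc => hne (by rw [hc])
      by_cases ha : a = g₀
      · rw [ha]
        obtain ⟨t, htT, hres⟩ := hT x y hxy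
        have htT' : t ∈ T := htT
        refine ⟨inr (g₀, t), Finset.mem_coe.mpr (hinS2 t htT'), ?_⟩
        unfold StronglyResolves at hres ⊢
        rw [e4 g₀ x t, e4 g₀ x y, e4 g₀ y t, e4 g₀ y x]
        exact hres
      · exact ⟨inr (a, y), Finset.mem_coe.mpr (hinS1 a y ha),
          stronglyResolves_self_right _ _ _⟩
    · by_cases hb : b = g₀
      · have ha : a ≠ g₀ := fun hc => hab (hc.trans hb.symm)
        exact ⟨inr (a, x), Finset.mem_coe.mpr (hinS1 a x ha),
          stronglyResolves_self_left _ _ _⟩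
      · exact ⟨inr (b, y), Finset.mem_coe.mpr (hinS1 b y hb),
          stronglyResolves_self_right _ _ _⟩
  have hSres : IsStrongResolvingSet (corona G H) ↑S := by
    rintro (a | ⟨a, x⟩) (b | ⟨b, y⟩) hne
    · exact keyII a b (by simpa using hne)
    · exact keyIR a b y
    · obtain ⟨w, hw, hr⟩ := keyIR b a x
      exact ⟨w, hw, stronglyResolves_comm hr⟩
    · exact keyRR a b x y hne
  have hup : strongDim (corona G H) ≤
      (Fintype.card V - 1) * Fintype.card W + strongDim H := by
    have h1 := strongDim_le_card hSres
    rwa [hcardS] at h1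
  -- lower bound
  obtain ⟨S₀, hS₀, hS₀card⟩ := exists_min_srs (corona G H)
  have hlb : (Fintype.card V - 1) * Fintype.card W + strongDim H ≤ S₀.card := by
    have claimA : ∀ g : V,
        IsStrongResolvingSet H ↑(Finset.univ.filter (fun t => inr (g, t) ∈ S₀)) := by
      intro g x y hxy
      obtain ⟨w, hwS, hres⟩ := hS₀ (inr (g, x)) (inr (g, y)) (by simp [hxy])
      unfold StronglyResolves at hres
      have hpos : 0 < H.dist x y := hH.pos_dist_of_ne hxy
      have hcomm : H.dist x y = H.dist y x := SimpleGraph.dist_comm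
      obtain (c | ⟨c, m⟩) := w
      · rw [e2' c g x, e2' c g y, e4 g x y, e4 g y x] at hres
        exfalso; omega
      · by_cases hcg : c = g
        · rw [hcg] at hres hwS
          refine ⟨m, Finset.mem_coe.mpr (Finset.mem_filter.mpr
            ⟨Finset.mem_univ m, Finset.mem_coe.mp hwS⟩), ?_⟩
          unfold StronglyResolves
          rw [e4 g x m, e4 g x y, e4 g y m, e4 g y x] at hres
          exact hres
        · rw [e3 g c (fun hc => hcg hc.symm) x m, e3 g c (fun hc => hcg hc.symm) y m,
            e4 g x y, e4 g y x] at hres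
          exfalso; omega
    have claimB : ∀ (g g' : V), g ≠ g' → ∀ (x y : W),
        inr (g, x) ∈ S₀ ∨ inr (g', y) ∈ S₀ := by
      intro g g' hgg' x y
      obtain ⟨w, hwS, hres⟩ := hS₀ (inr (g, x)) (inr (g', y)) (by simp [hgg'])
      unfold StronglyResolves at hres
      have h1 : 0 < G.dist g g' := hG.pos_dist_of_ne hgg'
      have hcm : G.dist g g' = G.dist g' g := SimpleGraph.dist_comm
      obtain (c | ⟨c, m⟩) := w
      · rw [e2' c g x, e2' c g' y, e3 g g' hgg' x y, e3 g' g (Ne.symm hgg') y x] at hres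
        have t1 := hG.dist_triangle (u := g) (v := g') (w := c)
        have t2 := hG.dist_triangle (u := g') (v := g) (w := c)
        exfalso; omega
      · by_cases hcg : c = g
        · rw [hcg] at hres hwS
          rw [e4 g x m, e3 g' g (Ne.symm hgg') y m, e3 g g' hgg' x y,
            e3 g' g (Ne.symm hgg') y x] at hres
          have h5 := hd2 x m
          have hxm : H.dist x m = 0 := by omega
          have hxm' : x = m := hH.dist_eq_zero_iff.mp hxm
          rw [← hxm'] at hwS
          exact Or.inl (Finset.mem_coe.mp hwS)
        · by_cases hcg' : c = g'
          · rw [hcg'] at hres hwS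
            rw [e3 g g' hgg' x m, e4 g' y m, e3 g g' hgg' x y,
              e3 g' g (Ne.symm hgg') y x] at hres
            have h5 := hd2 y m
            have hym : H.dist y m = 0 := by omega
            have hym' : y = m := hH.dist_eq_zero_iff.mp hym
            rw [← hym'] at hwS
            exact Or.inr (Finset.mem_coe.mp hwS)
          · rw [e3 g c (fun hc => hcg hc.symm) x m,
              e3 g' c (fun hc => hcg' hc.symm) y m, e3 g g' hgg' x y,
              e3 g' g (Ne.symm hgg') y x] at hres
            have t1 := hG.dist_triangle (u := g) (v := g') (w := c)
            have t2 := hG.dist_triangle (u := g') (v := g) (w := c)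
            exfalso; omega
    by_cases hfull : ∀ (g : V) (t : W), inr (g, t) ∈ S₀
    · have hsub : (Finset.univ : Finset (V × W)).image (inr : V × W → V ⊕ V × W)
          ⊆ S₀ := by
        intro z hz
        obtain ⟨p, -, rfl⟩ := Finset.mem_image.mp hz
        exact hfull p.1 p.2
      have h1 := Finset.card_le_card hsub
      rw [Finset.card_image_of_injective _ Sum.inr_injective, Finset.card_univ,
        Fintype.card_prod] at h1
      have h2 : strongDim H ≤ Fintype.card W := by
        have h3 := strongDim_le_card (univ_srs H)
        rwa [Finset.card_univ] at h3
      have h3 : 0 < Fintype.card V := Fintype.card_pos_iff.mpr ⟨g₀⟩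
      have heq : (Fintype.card V - 1) * Fintype.card W + Fintype.card W =
          Fintype.card V * Fintype.card W := by
        rw [Nat.sub_one_mul, Nat.sub_add_cancel (Nat.le_mul_of_pos_left _ h3)]
      calc (Fintype.card V - 1) * Fintype.card W + strongDim H
          ≤ (Fintype.card V - 1) * Fintype.card W + Fintype.card W :=
            Nat.add_le_add_left h2 _
        _ = Fintype.card V * Fintype.card W := heq
        _ ≤ S₀.card := h1
    · push_neg at hfull
      obtain ⟨g₁, t₁, hg₁⟩ := hfull
      have hall : ∀ g : V, g ≠ g₁ → ∀ t : W, inr (g, t) ∈ S₀ :=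
        fun g hg t => (claimB g g₁ hg t t₁).resolve_right hg₁
      set A1 : Finset (V ⊕ V × W) :=
        ((Finset.univ.erase g₁) ×ˢ (Finset.univ : Finset W)).image inr with hA1
      set A2 : Finset (V ⊕ V × W) :=
        (Finset.univ.filter (fun t => inr (g₁, t) ∈ S₀)).image
          (fun t => inr (g₁, t)) with hA2
      have hsub : A1 ∪ A2 ⊆ S₀ := by
        intro z hz
        rcases Finset.mem_union.mp hz with hz | hz
        · obtain ⟨p, hp, rfl⟩ := Finset.mem_image.mp hz
          obtain ⟨hp1, -⟩ := Finset.mem_product.mp hp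
          exact hall p.1 (Finset.mem_erase.mp hp1).1 p.2
        · obtain ⟨t, ht, rfl⟩ := Finset.mem_image.mp hz
          exact (Finset.mem_filter.mp ht).2
      have hdisj : Disjoint A1 A2 := by
        rw [Finset.disjoint_left]
        rintro z hz1 hz2
        obtain ⟨p, hp, rfl⟩ := Finset.mem_image.mp hz1
        obtain ⟨t, -, hte⟩ := Finset.mem_image.mp hz2
        obtain ⟨hp1, -⟩ := Finset.mem_product.mp hp
        have hpg : (g₁, t) = p := Sum.inr_injective hte
        exact (Finset.mem_erase.mp hp1).1 (by rw [← hpg])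
      have hcard1 : A1.card = (Fintype.card V - 1) * Fintype.card W := by
        rw [hA1, Finset.card_image_of_injective _ Sum.inr_injective,
          Finset.card_product, Finset.card_erase_of_mem (Finset.mem_univ g₁),
          Finset.card_univ, Finset.card_univ]
      have hinj2 : Function.Injective (fun t : W => (inr (g₁, t) : V ⊕ V × W)) := by
        intro s t hst
        simpa using hst
      have hcard2 : strongDim H ≤ A2.card := by
        rw [hA2, Finset.card_image_of_injective _ hinj2]
        exact strongDim_le_card (claimA g₁)
      have h1 := Finset.card_le_card hsub
      rw [Finset.card_union_of_disjoint hdisj, hcard1] at h1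
      calc (Fintype.card V - 1) * Fintype.card W + strongDim H
          ≤ (Fintype.card V - 1) * Fintype.card W + A2.card :=
            Nat.add_le_add_left hcard2 _
        _ ≤ S₀.card := h1
  refine le_antisymm hup ?_
  rw [← hS₀card]
  exact hlb
end
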